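/- Let g be the symmetric bilinear form on ℝ⁵ whose matrix in the frame (X, ∂_u, V₁, V₂, 2∂_t + ∂_z) is [[0,1,0,0,0],[1,0,0,0,0],[0,0,1,0,0],[0,0,0,1,0],[0,0,0,0,1]], where X = sin(2u) V₁ + 2 sin²(u) ∂_t - cos²(u) ∂_z, V₁ = cos t ∂_x + sin t(∂_y + x ∂_z), V₂ = -sin t ∂_x + cos t(∂_y + x ∂_z). Then at every point of ℝ⁵ this bilinear form is nondegenerate of signature (4,1) (Lorentzian), and g(X, X) = 0 everywhere, i.e. X is lightlike. -/

import Mathlib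

open Real Matrix

/-- Coordinate vector of Thurston's vector field
`X = sin(2u) V₁ + 2sin²(u) ∂_t - cos²(u) ∂_z` at `p = (x,y,z,t,u)`. -/
noncomputable def Xvec (p : Fin 5 → ℝ) : Fin 5 → ℝ :=
  ![Real.sin (2 * p 4) * Real.cos (p 3),
    Real.sin (2 * p 4) * Real.sin (p 3),
    Real.sin (2 * p 4) * (p 0 * Real.sin (p 3)) - Real.cos (p 4) ^ 2,
    2 * Real.sin (p 4) ^ 2,
    0]

/-- The matrix whose columns are the frame `(X, ∂_u, V₁, V₂, 2∂_t + ∂_z)`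
at `p = (x,y,z,t,u)`. -/
noncomputable def frameMat (p : Fin 5 → ℝ) : Matrix (Fin 5) (Fin 5) ℝ :=
  (Matrix.of
    ![Xvec p,
      ![0, 0, 0, 0, 1],
      ![Real.cos (p 3), Real.sin (p 3), p 0 * Real.sin (p 3), 0, 0],
      ![-Real.sin (p 3), Real.cos (p 3), p 0 * Real.cos (p 3), 0, 0],
      ![0, 0, 1, 2, 0]])ᵀ

/-- The Gram matrix prescribed for the frame `(X, ∂_u, V₁, V₂, 2∂_t+∂_z)`. -/
noncomputable def J₀ : Matrix (Fin 5) (Fin 5) ℝ :=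
  !![0, 1, 0, 0, 0;
     1, 0, 0, 0, 0;
     0, 0, 1, 0, 0;
     0, 0, 0, 1, 0;
     0, 0, 0, 0, 1]

/-- The coordinate matrix of the metric `g` whose matrix in the frame
`(X, ∂_u, V₁, V₂, 2∂_t+∂_z)` is `J₀`. -/
noncomputable def gMat (p : Fin 5 → ℝ) : Matrix (Fin 5) (Fin 5) ℝ :=
  ((frameMat p)⁻¹)ᵀ * J₀ * (frameMat p)⁻¹

lemma frameMat_det (p : Fin 5 → ℝ) : (frameMat p).det = 2 := by
  have ht := sin_sq_add_cos_sq (p 3)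
  have hu := sin_sq_add_cos_sq (p 4)
  rw [frameMat, Matrix.det_transpose]
  simp [Matrix.det_succ_row_zero, Fin.sum_univ_succ, Xvec, Fin.succAbove]
  ring_nf
  nlinarith [ht, hu, sq_nonneg (Real.sin (p 3)), sq_nonneg (Real.cos (p 3))]

lemma J₀_det : J₀.det = -1 := by
  simp [J₀, Matrix.det_succ_row_zero, Fin.sum_univ_succ, Fin.succAbove]

lemma frameMat_inv_mul (p : Fin 5 → ℝ) : (frameMat p)⁻¹ * frameMat p = 1 :=
  Matrix.nonsing_inv_mul _ (by rw [frameMat_det]; norm_num)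

lemma frameMat_mul_inv (p : Fin 5 → ℝ) : frameMat p * (frameMat p)⁻¹ = 1 :=
  Matrix.mul_nonsing_inv _ (by rw [frameMat_det]; norm_num)

lemma gMat_det (p : Fin 5 → ℝ) : (gMat p).det = -(4⁻¹) := by
  rw [gMat, Matrix.det_mul, Matrix.det_mul, Matrix.det_transpose, Matrix.det_nonsing_inv,
    frameMat_det, J₀_det, Ring.inverse_eq_inv']
  norm_num

lemma J₀_herm : J₀.IsHermitian := by
  rw [Matrix.IsHermitian]
  ext i j
  fin_cases i <;> fin_cases j <;>
    simp [J₀, Matrix.conjTranspose_apply, Matrix.vecHead, Matrix.vecTail]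

lemma gMat_herm (p : Fin 5 → ℝ) : (gMat p).IsHermitian := by
  rw [gMat, ← Matrix.conjTranspose_eq_transpose_of_trivial]
  exact Matrix.isHermitian_conjTranspose_mul_mul _ J₀_herm

lemma quad_form (p : Fin 5 → ℝ) (v : Fin 5 → ℝ) :
    v ⬝ᵥ (gMat p).mulVec v =
      2 * ((frameMat p)⁻¹ *ᵥ v) 0 * ((frameMat p)⁻¹ *ᵥ v) 1 +
      ((frameMat p)⁻¹ *ᵥ v) 2 ^ 2 + ((frameMat p)⁻¹ *ᵥ v) 3 ^ 2 +
      ((frameMat p)⁻¹ *ᵥ v) 4 ^ 2 := by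
  set A := (frameMat p)⁻¹ with hA
  have h1 : (gMat p).mulVec v = Aᵀ *ᵥ (J₀ *ᵥ (A *ᵥ v)) := by
    rw [gMat, ← hA, ← Matrix.mulVec_mulVec, ← Matrix.mulVec_mulVec]
  rw [h1, Matrix.mulVec_transpose, dotProduct_comm, ← Matrix.dotProduct_mulVec,
    Matrix.mulVec_mulVec]
  set w := A *ᵥ v with hw
  rw [← Matrix.mulVec_mulVec, ← hw]
  simp [J₀, Matrix.mulVec, dotProduct, Fin.sum_univ_five, Matrix.vecHead,
    Matrix.vecTail]
  ring

lemma quad_pos_aux (w : Fin 5 → ℝ) (hwne : w ≠ 0) (h01 : w 0 = w 1) :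
    0 < 2 * w 0 * w 1 + w 2 ^ 2 + w 3 ^ 2 + w 4 ^ 2 := by
  have hd : w 0 ≠ 0 ∨ w 1 ≠ 0 ∨ w 2 ≠ 0 ∨ w 3 ≠ 0 ∨ w 4 ≠ 0 := by
    by_contra hcon
    push_neg at hcon
    obtain ⟨h0, h1, h2, h3, h4⟩ := hcon
    exact hwne (funext fun k => by fin_cases k <;> assumption)
  rw [h01]
  rcases hd with h | h | h | h | h
  · rw [h01] at h
    nlinarith [mul_self_pos.mpr h, sq_nonneg (w 2), sq_nonneg (w 3), sq_nonneg (w 4)]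
  · nlinarith [mul_self_pos.mpr h, sq_nonneg (w 2), sq_nonneg (w 3), sq_nonneg (w 4)]
  · nlinarith [mul_self_pos.mpr h, mul_self_nonneg (w 1), sq_nonneg (w 3), sq_nonneg (w 4)]
  · nlinarith [mul_self_pos.mpr h, mul_self_nonneg (w 1), sq_nonneg (w 2), sq_nonneg (w 4)]
  · nlinarith [mul_self_pos.mpr h, mul_self_nonneg (w 1), sq_nonneg (w 2), sq_nonneg (w 3)]

lemma quad_pos (p : Fin 5 → ℝ) (v : Fin 5 → ℝ) (hv : v ≠ 0)
    (h01 : ((frameMat p)⁻¹ *ᵥ v) 0 = ((frameMat p)⁻¹ *ᵥ v) 1) :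
    0 < v ⬝ᵥ (gMat p).mulVec v := by
  rw [quad_form]
  refine quad_pos_aux _ (fun h0 => hv ?_) h01
  have hv2 : v = frameMat p *ᵥ ((frameMat p)⁻¹ *ᵥ v) := by
    rw [Matrix.mulVec_mulVec, frameMat_mul_inv, Matrix.one_mulVec]
  rw [hv2, h0, Matrix.mulVec_zero]


set_option maxRecDepth 10000 in
/-- At every point of `ℝ⁵` the frame is a basis, the bilinear form `g` is
nondegenerate of Lorentzian signature `(4,1)`, and `g(X,X) = 0`, i.e. `X` is
lightlike. -/
theorem lightlike_metric (p : Fin 5 → ℝ) :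
    (frameMat p).det ≠ 0 ∧
    (gMat p).det ≠ 0 ∧
    (∃ h : (gMat p).IsHermitian,
      Nat.card {i : Fin 5 // 0 < h.eigenvalues i} = 4 ∧
      Nat.card {i : Fin 5 // h.eigenvalues i < 0} = 1) ∧
    Xvec p ⬝ᵥ (gMat p).mulVec (Xvec p) = 0 := by
  have h : (gMat p).IsHermitian := gMat_herm p
  set lam := h.eigenvalues with hlam
  set U := (h.eigenvectorUnitary : Matrix (Fin 5) (Fin 5) ℝ) with hU
  have hU1 : U * star U = 1 := Matrix.mem_unitaryGroup_iff.mp h.eigenvectorUnitary.2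
  have hU2 : star U * U = 1 := Matrix.mem_unitaryGroup_iff'.mp h.eigenvectorUnitary.2
  have hofReal : (RCLike.ofReal ∘ lam : Fin 5 → ℝ) = lam := by
    funext k; simp [RCLike.ofReal_real_eq_id]
  have hspec : gMat p = U * Matrix.diagonal lam * star U := by
    conv_lhs => rw [h.spectral_theorem]
    rw [hofReal, Unitary.conjStarAlgAut_apply]
  have hprod : ∏ i, lam i = -(4⁻¹) := by
    have hd := h.det_eq_prod_eigenvalues
    rw [gMat_det] at hd
    simpa [RCLike.ofReal_real_eq_id] using hd.symm
  have hne : ∀ i, lam i ≠ 0 := by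
    intro i hi
    have h0 : ∏ i, lam i = 0 := Finset.prod_eq_zero (Finset.mem_univ i) hi
    rw [hprod] at h0
    norm_num at h0
  -- the quadratic form in the eigenbasis
  have hUdot : ∀ x y : Fin 5 → ℝ, (U *ᵥ x) ⬝ᵥ (U *ᵥ y) = x ⬝ᵥ y := by
    intro x y
    rw [Matrix.dotProduct_mulVec, ← Matrix.mulVec_transpose, Matrix.mulVec_mulVec,
      ← Matrix.conjTranspose_eq_transpose_of_trivial, ← Matrix.star_eq_conjTranspose,
      hU2, Matrix.one_mulVec]
  have key : ∀ c : Fin 5 → ℝ,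
      (U *ᵥ c) ⬝ᵥ (gMat p).mulVec (U *ᵥ c) = ∑ k, lam k * c k ^ 2 := by
    intro c
    have h2 : (gMat p).mulVec (U *ᵥ c) = U *ᵥ (Matrix.diagonal lam *ᵥ c) := by
      rw [hspec, Matrix.mulVec_mulVec, mul_assoc, mul_assoc, hU2, mul_one,
        ← Matrix.mulVec_mulVec]
    rw [h2, hUdot]
    simp [dotProduct, Matrix.mulVec_diagonal]
    exact Finset.sum_congr rfl fun k _ => by ring
  -- at most one negative eigenvalue
  have hneg_sub : ∀ i j, lam i < 0 → lam j < 0 → i = j := by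
    intro i j hi hj
    by_contra hij
    set φ : (Fin 5 → ℝ) → ℝ :=
      fun v => ((frameMat p)⁻¹ *ᵥ v) 0 - ((frameMat p)⁻¹ *ᵥ v) 1 with hφ
    obtain ⟨a, b, hab, habφ⟩ : ∃ a b : ℝ, ¬(a = 0 ∧ b = 0) ∧
        a * φ (U *ᵥ Pi.single i 1) + b * φ (U *ᵥ Pi.single j 1) = 0 := by
      by_cases h0 : φ (U *ᵥ Pi.single i 1) = 0
      · exact ⟨1, 0, by norm_num, by rw [h0]; ring⟩
      · exact ⟨φ (U *ᵥ Pi.single j 1), -φ (U *ᵥ Pi.single i 1),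
          fun hcon => h0 (by have := hcon.2; linarith), by ring⟩
    set c : Fin 5 → ℝ := a • (Pi.single i 1 : Fin 5 → ℝ) + b • (Pi.single j 1 : Fin 5 → ℝ) with hc
    have hci : c i = a := by
      simp [hc, Pi.single_apply, hij]
    have hcj : c j = b := by
      simp [hc, Pi.single_apply, Ne.symm hij]
    set v : Fin 5 → ℝ := U *ᵥ c with hv
    have hvne : v ≠ 0 := by
      intro h0
      have hc0 : c = 0 := by
        have hcc := congrArg (fun x => (star U) *ᵥ x) h0
        simpa [hv, Matrix.mulVec_mulVec, hU2, Matrix.one_mulVec] using hcc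
      rcases not_and_or.mp hab with ha | hb
      · exact ha (by rw [← hci, hc0]; rfl)
      · exact hb (by rw [← hcj, hc0]; rfl)
    have hφv : φ v = 0 := by
      have hlin : φ v = a * φ (U *ᵥ Pi.single i 1) + b * φ (U *ᵥ Pi.single j 1) := by
        simp only [hφ, hv, hc, Matrix.mulVec_add, Matrix.mulVec_smul, Pi.add_apply,
          Pi.smul_apply, smul_eq_mul]
        ring
      rw [hlin, habφ]
    have hpos : 0 < v ⬝ᵥ (gMat p).mulVec v := by
      refine quad_pos p v hvne ?_
      have := hφv
      simp only [hφ] at this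
      linarith
    have hval : v ⬝ᵥ (gMat p).mulVec v = a ^ 2 * lam i + b ^ 2 * lam j := by
      rw [hv, key c]
      have hterm : ∀ k, lam k * c k ^ 2 =
          a ^ 2 * (lam k * (Pi.single i 1 : Fin 5 → ℝ) k) +
          b ^ 2 * (lam k * (Pi.single j 1 : Fin 5 → ℝ) k) := by
        intro k
        rcases eq_or_ne k i with rfl | hki
        · simp [hc, Pi.single_apply, hij]; ring
        · rcases eq_or_ne k j with rfl | hkj
          · simp [hc, Pi.single_apply, Ne.symm hij]; ring
          · simp [hc, Pi.single_apply, hki, hkj]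
      rw [Finset.sum_congr rfl fun k _ => hterm k, Finset.sum_add_distrib,
        ← Finset.mul_sum, ← Finset.mul_sum]
      congr 1 <;>
      · congr 1
        simp [Pi.single_apply, mul_ite, Finset.sum_ite_eq', Finset.mem_univ]
    rw [hval] at hpos
    nlinarith [sq_nonneg a, sq_nonneg b]
  -- existence of a negative eigenvalue
  obtain ⟨i₀, hi₀⟩ : ∃ i, lam i < 0 := by
    by_contra hno
    push_neg at hno
    have hpos : 0 < ∏ i, lam i :=
      Finset.prod_pos fun i _ => lt_of_le_of_ne (hno i) (Ne.symm (hne i))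
    rw [hprod] at hpos
    norm_num at hpos
  have hiff : ∀ j, lam j < 0 ↔ j = i₀ :=
    fun j => ⟨fun hj => hneg_sub j i₀ hj hi₀, fun e => e ▸ hi₀⟩
  have hposiff : ∀ j, 0 < lam j ↔ j ≠ i₀ := by
    intro j
    constructor
    · intro hj hji
      rw [hji] at hj
      exact absurd hj (asymm hi₀)
    · intro hj
      rcases (hne j).lt_or_gt with hlt | hgt
      · exact absurd ((hiff j).mp hlt) hj
      · exact hgt
  refine ⟨by rw [frameMat_det]; norm_num, by rw [gMat_det]; norm_num, ⟨h, ?_, ?_⟩, ?_⟩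
  · -- four positive eigenvalues
    rw [Nat.card_congr (Equiv.subtypeEquivRight hposiff), Nat.card_eq_fintype_card]
    rw [Fintype.card_subtype_compl, Fintype.card_subtype_eq, Fintype.card_fin]
  · -- one negative eigenvalue
    rw [Nat.card_congr (Equiv.subtypeEquivRight hiff), Nat.card_eq_fintype_card,
      Fintype.card_subtype_eq]
  · -- X is lightlike
    have hX : frameMat p *ᵥ ![1, 0, 0, 0, 0] = Xvec p := by
      funext k
      simp [Matrix.mulVec, dotProduct, Fin.sum_univ_five, frameMat]
    rw [← hX, quad_form]
    have hw : (frameMat p)⁻¹ *ᵥ (frameMat p *ᵥ ![1, 0, 0, 0, 0]) =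
        (![1, 0, 0, 0, 0] : Fin 5 → ℝ) := by
      rw [Matrix.mulVec_mulVec, frameMat_inv_mul, Matrix.one_mulVec]
    rw [hw]
    norm_num
    simp
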